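/- arXiv:1211.5392 — 2 statements merged into one kernel-verified Lean document; each statement's English description precedes it below -/
import Mathlib

section
/- Let ρ : 𝕋 → ℝ be continuous, nonnegative, with ∫_𝕋 ρ(y) dy = 2π, and let x₀ be a maximum point of ρ with ρ(x₀) ≥ 4. Set δ = 2π/ρ(x₀) (so 0 < δ ≤ π/2). Then (1/2π) P.V. ∫_𝕋 (ρ(x₀) − ρ(y)) / sin²((x₀−y)/2) dy ≥ ρ(x₀)²/(4π²). -/
open Real Set MeasureTheory

open scoped ENNReal

lemma lint_shift {T : ℝ} (hT : 0 < T) {f : ℝ → ℝ≥0∞} (hf : Function.Periodic f T) (a b : ℝ) :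
    ∫⁻ y in Ioc a (a+T), f y = ∫⁻ y in Ioc b (b+T), f y := by
  haveI : Fact (0 < T) := ⟨hT⟩
  have h1 : ∀ c : ℝ, (∫⁻ y in Ioc c (c+T), f y) = ∫⁻ x : AddCircle T, hf.lift x := by
    intro c
    rw [← AddCircle.lintegral_preimage T c]
    refine setLIntegral_congr_fun measurableSet_Ioc (fun y _ => ?_)
    exact (hf.lift_coe y).symm
  rw [h1 a, h1 b]

/-- Nonlinear lower bound for the half-Laplacian at a large maximum: if `ρ ≥ 0` is
continuous, `2π`-periodic with `∫_𝕋 ρ = 2π`, and `ρ(x₀) = max ρ ≥ 4`, then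
`(1/2π) ∫_𝕋 (ρ(x₀)-ρ(y))/sin²((x₀-y)/2) dy ≥ ρ(x₀)²/(4π²)`. -/
theorem stmt4 (ρ : ℝ → ℝ) (x₀ : ℝ)
    (hcont : Continuous ρ) (hnonneg : ∀ x, 0 ≤ ρ x)
    (hper : ∀ x, ρ (x + 2*π) = ρ x)
    (hmass : (∫ y in (-π)..π, ρ y) = 2*π)
    (hmax : ∀ x, ρ x ≤ ρ x₀) (hbig : 4 ≤ ρ x₀) :
    ENNReal.ofReal ((ρ x₀)^2 / (4*π^2)) ≤
      ENNReal.ofReal (1/(2*π)) *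
        ∫⁻ y in Set.Ioc (-π) π,
          ENNReal.ofReal ((ρ x₀ - ρ y) / (Real.sin ((x₀ - y)/2))^2) := by
  have hπ : (0:ℝ) < π := Real.pi_pos
  set M := ρ x₀ with hM
  have hM0 : (0:ℝ) < M := by linarith
  set δ : ℝ := 2*π/M with hδdef
  have hδ0 : 0 < δ := by positivity
  have hδπ : 2*δ ≤ π := by
    have h : 2*δ = 4*π/M := by rw [hδdef]; ring
    rw [h, div_le_iff₀ hM0]; nlinarith
  set f : ℝ → ℝ≥0∞ := fun y => ENNReal.ofReal ((M - ρ y) / (Real.sin ((x₀ - y)/2))^2)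
    with hf
  have hfper : Function.Periodic f (2*π) := by
    intro y
    have h2 : (x₀ - (y + 2*π))/2 = (x₀ - y)/2 - π := by ring
    simp only [hf, h2, Real.sin_sub_pi, neg_sq, hper y]
  have hgper : Function.Periodic (fun y => ENNReal.ofReal (ρ y)) (2*π) := by
    intro y; simp only [hper y]
  have hmass' : (∫⁻ y in Ioc (-π) (-π + 2*π), ENNReal.ofReal (ρ y)) = ENNReal.ofReal (2*π) := by
    rw [show -π + 2*π = π by ring,
      ← ofReal_integral_eq_lintegral_ofReal (hcont.integrableOn_Ioc) (ae_of_all _ hnonneg)]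
    rw [← intervalIntegral.integral_of_le (by linarith : -π ≤ π), hmass]
  set Ω : Set ℝ := Ioc (x₀ - 2*δ) (x₀ + 2*δ) with hΩ
  have hΩsub : Ω ⊆ Ioc (x₀ - π) (x₀ - π + 2*π) := Ioc_subset_Ioc (by linarith) (by linarith)
  have hU2m' : MeasurableSet {y : ℝ | M/2 ≤ ρ y} := measurableSet_le measurable_const hcont.measurable
  set U2 : Set ℝ := {y | M/2 ≤ ρ y} ∩ Ω with hU2def
  have hU2meas : MeasurableSet U2 := hU2m'.inter measurableSet_Ioc
  have hmark : ENNReal.ofReal (M/2) * volume U2 ≤ ENNReal.ofReal (2*π) := by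
    have h1 := mul_meas_ge_le_lintegral₀ (μ := volume.restrict Ω)
      ((ENNReal.measurable_ofReal.comp hcont.measurable).aemeasurable) (ENNReal.ofReal (M/2))
    have hset : {x | ENNReal.ofReal (M/2) ≤ ENNReal.ofReal (ρ x)} = {y | M/2 ≤ ρ y} := by
      ext y; simp [ENNReal.ofReal_le_ofReal_iff (hnonneg y)]
    simp only [Function.comp_apply] at h1
    rw [hset, Measure.restrict_apply hU2m'] at h1
    refine h1.trans ?_
    calc (∫⁻ y in Ω, ENNReal.ofReal (ρ y))
        ≤ ∫⁻ y in Ioc (x₀-π) (x₀-π+2*π), ENNReal.ofReal (ρ y) := lintegral_mono_set hΩsub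
      _ = ∫⁻ y in Ioc (-π) (-π+2*π), ENNReal.ofReal (ρ y) :=
          lint_shift (by positivity) hgper _ _
      _ = ENNReal.ofReal (2*π) := hmass'
  have hU2 : volume U2 ≤ ENNReal.ofReal (2*δ) := by
    have h2 : (2:ℝ)*δ = 2*π/(M/2) := by rw [hδdef]; field_simp
    rw [h2, ENNReal.ofReal_div_of_pos (by linarith)]
    rw [ENNReal.le_div_iff_mul_le (Or.inl (by simp; linarith)) (Or.inl ENNReal.ofReal_ne_top)]
    rw [mul_comm]; exact hmark
  have hΩvol : volume Ω = ENNReal.ofReal (4*δ) := by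
    rw [hΩ, Real.volume_Ioc]; congr 1; ring
  have hU1 : ENNReal.ofReal (2*δ) ≤ volume (Ω \ U2) := by
    calc ENNReal.ofReal (2*δ) = ENNReal.ofReal (4*δ) - ENNReal.ofReal (2*δ) := by
          rw [← ENNReal.ofReal_sub _ (by positivity)]; congr 1; ring
      _ ≤ volume Ω - volume U2 := tsub_le_tsub hΩvol.symm.le hU2
      _ ≤ volume (Ω \ U2) := le_measure_diff
  have hpt : ∀ y ∈ Ω \ U2, ENNReal.ofReal (M/2/δ^2) ≤ f y := by
    rintro y ⟨hyΩ, hyU2⟩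
    have hρy : ρ y < M/2 := by
      by_contra h
      exact hyU2 ⟨le_of_not_gt h, hyΩ⟩
    have hy1 : x₀ - 2*δ < y := hyΩ.1
    have hy2 : y ≤ x₀ + 2*δ := hyΩ.2
    set t := (x₀ - y)/2 with htdef
    have ht1 : -δ ≤ t := by rw [htdef]; linarith
    have ht2 : t ≤ δ := by rw [htdef]; linarith
    have htne : t ≠ 0 := by
      intro h0
      have hyx : y = x₀ := by
        have : x₀ - y = 0 := by
          have := h0; rw [htdef] at this; linarith [this]
        linarith
      rw [hyx] at hρy; rw [← hM] at hρy; linarith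
    have hsinne : Real.sin t ≠ 0 := by
      intro hs
      exact htne ((Real.sin_eq_zero_iff_of_lt_of_lt (by linarith) (by linarith)).mp hs)
    have hsinpos : 0 < Real.sin t ^ 2 :=
      lt_of_le_of_ne (sq_nonneg _) (Ne.symm (pow_ne_zero 2 hsinne))
    have hsinle : Real.sin t ^ 2 ≤ δ^2 := by
      calc Real.sin t ^ 2 ≤ t^2 := Real.sin_sq_le_sq
        _ ≤ δ^2 := by nlinarith
    have hnum : M/2 ≤ M - ρ y := by linarith
    exact ENNReal.ofReal_le_ofReal
      (div_le_div₀ (by linarith) hnum hsinpos hsinle)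
  have hmain : ENNReal.ofReal (M^2/(2*π)) ≤ ∫⁻ y in Ioc (-π) π, f y := by
    rw [show Ioc (-π:ℝ) π = Ioc (-π) (-π + 2*π) by rw [show -π+2*π = π by ring],
      lint_shift (by positivity) hfper (-π) (x₀ - π)]
    calc ENNReal.ofReal (M^2/(2*π))
        = ENNReal.ofReal (M/2/δ^2) * ENNReal.ofReal (2*δ) := by
          rw [← ENNReal.ofReal_mul (by positivity)]
          congr 1
          rw [hδdef]; field_simp
      _ ≤ ENNReal.ofReal (M/2/δ^2) * volume (Ω \ U2) := mul_le_mul_right hU1 _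
      _ = ∫⁻ _ in Ω \ U2, ENNReal.ofReal (M/2/δ^2) := (setLIntegral_const _ _).symm
      _ ≤ ∫⁻ y in Ω \ U2, f y :=
          setLIntegral_mono' (measurableSet_Ioc.diff hU2meas) hpt
      _ ≤ ∫⁻ y in Ioc (x₀-π) (x₀-π+2*π), f y :=
          lintegral_mono_set (fun y hy => hΩsub hy.1)
  calc ENNReal.ofReal (M^2 / (4*π^2))
      = ENNReal.ofReal (1/(2*π)) * ENNReal.ofReal (M^2/(2*π)) := by
        rw [← ENNReal.ofReal_mul (by positivity)]
        congr 1
        field_simp; ring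
    _ ≤ ENNReal.ofReal (1/(2*π)) * ∫⁻ y in Ioc (-π) π, f y := mul_le_mul_right hmain _
end

section
/- Let ρ : 𝕋^d → ℝ be continuous with mean 1 over the torus of side 2π, ρ ≥ 0, and let x₀ be a maximum point of ρ. Then for 0 < α < 2 there exists an explicit constant c_{α,d} > 0 such that C_{α,d} P.V. ∫_{𝕋^d} (ρ(x₀) − ρ(y))/|x₀ − y|^{d+α} dy ≥ c_{α,d} (ρ(x₀) − 1), where C_{α,d} is the normalization constant of the fractional Laplacian. -/
open Real Set MeasureTheory
open Pointwise

/-- Coordinate vector in `EuclideanSpace ℝ (Fin d)`. -/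
noncomputable def euclVec (d : ℕ) (a : Fin d → ℝ) : EuclideanSpace ℝ (Fin d) :=
  (EuclideanSpace.equiv (Fin d) ℝ).symm a

/-- The symmetric cell `[-π, π]^d` of the torus `𝕋^d`. -/
def symCell (d : ℕ) : Set (EuclideanSpace ℝ (Fin d)) :=
  (EuclideanSpace.equiv (Fin d) ℝ) ⁻¹' (Set.univ.pi fun _ => Set.Icc (-π) π)

noncomputable def tpBasis (d : ℕ) : Module.Basis (Fin d) ℝ (EuclideanSpace ℝ (Fin d)) :=
  (((Pi.basisFun ℝ (Fin d)).map (EuclideanSpace.equiv (Fin d) ℝ).symm.toLinearEquiv).unitsSMul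
    (fun _ => Units.mk0 (2*π) (by positivity)))

lemma tpBasis_repr (d : ℕ) (v : EuclideanSpace ℝ (Fin d)) (i : Fin d) :
    (tpBasis d).repr v i = (2*π)⁻¹ * v i := by
  simp [tpBasis, Module.Basis.repr_unitsSMul, Units.smul_def]

lemma tpBasis_lattice {d : ℕ} {l : EuclideanSpace ℝ (Fin d)}
    (hl : l ∈ Submodule.span ℤ (Set.range (tpBasis d))) :
    ∃ ν : Fin d → ℤ, l = euclVec d fun i => 2*π*(ν i) := by
  rw [Submodule.mem_span_range_iff_exists_fun] at hl
  obtain ⟨ν, hν⟩ := hl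
  refine ⟨ν, ?_⟩
  apply (tpBasis d).repr.injective
  ext i
  rw [← hν]
  simp only [map_sum, map_zsmul, Finsupp.coe_finset_sum, Finset.sum_apply, Module.Basis.repr_self,
    tpBasis_repr]
  rw [Finset.sum_eq_single i]
  · simp [euclVec]
    field_simp
  · intro b _ hb; simp [Finsupp.single_apply, hb]
  · simp

def icoCell (d : ℕ) : Set (EuclideanSpace ℝ (Fin d)) :=
  (EuclideanSpace.equiv (Fin d) ℝ) ⁻¹' (Set.univ.pi fun _ => Set.Ico (-π) π)

lemma vadd_fd_eq_icoCell (d : ℕ) :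
    (euclVec d fun _ => -π) +ᵥ ZSpan.fundamentalDomain (tpBasis d) = icoCell d := by
  have h2 : (0:ℝ) < 2*π := by positivity
  ext x
  rw [Set.mem_vadd_set_iff_neg_vadd_mem]
  simp only [ZSpan.mem_fundamentalDomain, tpBasis_repr, icoCell, Set.mem_preimage,
    Set.mem_pi, Set.mem_univ, forall_true_left, Set.mem_Ico]
  have key : ∀ i : Fin d, ((-euclVec d fun _ => -π) +ᵥ x) i = x i + π := by
    intro i
    simp only [vadd_eq_add, PiLp.add_apply, PiLp.neg_apply]
    have he : (euclVec d fun _ : Fin d => -π) i = -π := by simp [euclVec]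
    rw [he]; ring
  constructor
  · intro h i
    have := h i
    rw [key i, inv_mul_lt_iff₀ h2, mul_one, mul_nonneg_iff_of_pos_left (inv_pos.mpr h2)] at this
    have hx : (EuclideanSpace.equiv (Fin d) ℝ) x i = x i := rfl
    rw [hx]
    constructor <;> linarith [this.1, this.2]
  · intro h i
    have := h i
    have hx : (EuclideanSpace.equiv (Fin d) ℝ) x i = x i := rfl
    rw [hx] at this
    rw [key i, inv_mul_lt_iff₀ h2, mul_one, mul_nonneg_iff_of_pos_left (inv_pos.mpr h2)]
    constructor <;> linarith [this.1, this.2]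

lemma volume_symCell (d : ℕ) : volume (symCell d) = (ENNReal.ofReal (2*π))^d := by
  have h : MeasurePreserving ((MeasurableEquiv.toLp 2 (Fin d → ℝ)).symm) volume volume :=
    EuclideanSpace.volume_preserving_symm_measurableEquiv_toLp (Fin d)
  have : symCell d = ((MeasurableEquiv.toLp 2 (Fin d → ℝ)).symm) ⁻¹'
      (Set.univ.pi fun _ => Set.Icc (-π) π) := rfl
  rw [this, h.measure_preimage (MeasurableSet.univ_pi fun _ => measurableSet_Icc).nullMeasurableSet,
    volume_pi_pi]
  simp [Real.volume_Icc, two_mul]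

lemma volume_icoCell (d : ℕ) : volume (icoCell d) = (ENNReal.ofReal (2*π))^d := by
  have h : MeasurePreserving ((MeasurableEquiv.toLp 2 (Fin d → ℝ)).symm) volume volume :=
    EuclideanSpace.volume_preserving_symm_measurableEquiv_toLp (Fin d)
  have : icoCell d = ((MeasurableEquiv.toLp 2 (Fin d → ℝ)).symm) ⁻¹'
      (Set.univ.pi fun _ => Set.Ico (-π) π) := rfl
  rw [this, h.measure_preimage (MeasurableSet.univ_pi fun _ => measurableSet_Ico).nullMeasurableSet,
    volume_pi_pi]
  simp [Real.volume_Ico, two_mul]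

lemma measurable_symCell (d : ℕ) : MeasurableSet (symCell d) :=
  ((MeasurableEquiv.toLp 2 (Fin d → ℝ)).symm).measurable
    (MeasurableSet.univ_pi fun _ => measurableSet_Icc)

lemma measurable_icoCell (d : ℕ) : MeasurableSet (icoCell d) :=
  ((MeasurableEquiv.toLp 2 (Fin d → ℝ)).symm).measurable
    (MeasurableSet.univ_pi fun _ => measurableSet_Ico)

lemma icoCell_ae_eq (d : ℕ) : icoCell d =ᵐ[volume] symCell d := by
  refine ae_eq_of_subset_of_measure_ge ?_ ?_ (measurable_icoCell d).nullMeasurableSet ?_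
  · intro x hx i hi
    exact Set.Ico_subset_Icc_self (hx i hi)
  · rw [volume_symCell, volume_icoCell]
  · rw [volume_symCell]
    exact ENNReal.pow_ne_top ENNReal.ofReal_ne_top

noncomputable instance (d : ℕ) (L : Submodule ℤ (EuclideanSpace ℝ (Fin d))) :
    MeasurableVAdd L (EuclideanSpace ℝ (Fin d)) :=
  { measurable_const_vadd := fun l => measurable_const_vadd (l : EuclideanSpace ℝ (Fin d)),
    measurable_vadd_const := fun x => by
     have : (fun l : L => l +ᵥ x)
         = (fun y : EuclideanSpace ℝ (Fin d) => y + x) ∘ (Subtype.val) := rfl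
     rw [this]
     exact (measurable_add_const x).comp measurable_subtype_coe }

instance (d : ℕ) (L : Submodule ℤ (EuclideanSpace ℝ (Fin d))) :
    VAddInvariantMeasure L (EuclideanSpace ℝ (Fin d)) volume :=
  ⟨fun l s _ => by
    show volume ((fun x => (l : EuclideanSpace ℝ (Fin d)) + x) ⁻¹' s) = volume s
    exact measure_preimage_add volume _ s⟩

instance (d : ℕ) (L : Submodule ℤ (EuclideanSpace ℝ (Fin d))) :
    VAddCommClass (EuclideanSpace ℝ (Fin d)) L (EuclideanSpace ℝ (Fin d)) :=
  ⟨fun a b c => by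
    show a + ((b : EuclideanSpace ℝ (Fin d)) + c) = (b : EuclideanSpace ℝ (Fin d)) + (a + c)
    exact add_left_comm a b c⟩

lemma integral_translate (d : ℕ) (ρ : EuclideanSpace ℝ (Fin d) → ℝ)
    (hper : ∀ (ν : Fin d → ℤ) x, ρ (x + euclVec d fun i => 2*π*(ν i)) = ρ x)
    (x₀ : EuclideanSpace ℝ (Fin d)) :
    ∫ z in symCell d, ρ (x₀ + z) = ∫ z in symCell d, ρ z := by
  have hinv : ∀ (l : Submodule.span ℤ (Set.range (tpBasis d)))
      (x : EuclideanSpace ℝ (Fin d)), ρ (l +ᵥ x) = ρ x := by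
    rintro ⟨l, hl⟩ x
    obtain ⟨ν, rfl⟩ := tpBasis_lattice hl
    have h : (⟨_, hl⟩ : Submodule.span ℤ (Set.range (tpBasis d))) +ᵥ x
        = x + euclVec d fun i => 2*π*(ν i) := add_comm _ _
    rw [h, hper]
  have hD := ZSpan.isAddFundamentalDomain (tpBasis d) volume
  have hFD1 : IsAddFundamentalDomain (Submodule.span ℤ (Set.range (tpBasis d)))
      (icoCell d) volume := by
    rw [← vadd_fd_eq_icoCell]
    exact hD.vadd_of_comm _
  have hFD2 : IsAddFundamentalDomain (Submodule.span ℤ (Set.range (tpBasis d)))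
      (x₀ +ᵥ icoCell d) volume := hFD1.vadd_of_comm x₀
  calc ∫ z in symCell d, ρ (x₀ + z)
      = ∫ z in icoCell d, ρ (x₀ + z) := (setIntegral_congr_set (icoCell_ae_eq d)).symm
    _ = ∫ y in x₀ +ᵥ icoCell d, ρ y := by
        rw [show x₀ +ᵥ icoCell d = (fun z => x₀ + z) '' icoCell d from rfl,
          (measurePreserving_add_left volume x₀).setIntegral_image_emb
            ((MeasurableEquiv.addLeft x₀).measurableEmbedding) ρ (icoCell d)]
    _ = ∫ y in icoCell d, ρ y := hFD2.setIntegral_eq hFD1 hinv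
    _ = ∫ z in symCell d, ρ z := setIntegral_congr_set (icoCell_ae_eq d)

lemma norm_le_of_mem_symCell {d : ℕ} {z : EuclideanSpace ℝ (Fin d)} (hz : z ∈ symCell d) :
    ‖z‖ ≤ π * Real.sqrt d := by
  rw [EuclideanSpace.norm_eq]
  have h1 : ∀ i, ‖z i‖ ^ 2 ≤ π ^ 2 := by
    intro i
    have h := hz i (Set.mem_univ i)
    have habs : |z i| ≤ π := abs_le.mpr ⟨h.1, h.2⟩
    calc ‖z i‖^2 = |z i|^2 := by rw [Real.norm_eq_abs]
    _ ≤ π^2 := by nlinarith [abs_nonneg (z i)]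
  calc Real.sqrt (∑ i, ‖z i‖^2) ≤ Real.sqrt (∑ _i : Fin d, π^2) :=
        Real.sqrt_le_sqrt (Finset.sum_le_sum fun i _ => h1 i)
  _ = π * Real.sqrt d := by
      rw [Finset.sum_const, Finset.card_univ, Fintype.card_fin, nsmul_eq_mul,
        Real.sqrt_mul (by positivity), Real.sqrt_sq pi_pos.le]
      ring

/-- Fractional-Laplacian lower bound at a maximum point on `𝕋^d`: for `ρ ≥ 0`
continuous, `2π`-periodic with mean `1`, maximum at `x₀`, and `0 < α < 2`,
`C_{α,d} ∫_{𝕋^d} (ρ(x₀)-ρ(y))/|x₀-y|^{d+α} dy ≥ c_{α,d} (ρ(x₀)-1)` with the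
explicit constant `c_{α,d} = C_{α,d} (π√d)^{-(d+α)} (2π)^d`. -/
theorem stmt14 (d : ℕ) (hd : 0 < d) (α : ℝ) (hα : 0 < α) (hα2 : α < 2)
    (C : ℝ) (hC : 0 < C)
    (ρ : EuclideanSpace ℝ (Fin d) → ℝ) (x₀ : EuclideanSpace ℝ (Fin d))
    (hcont : Continuous ρ) (hnonneg : ∀ x, 0 ≤ ρ x)
    (hper : ∀ (ν : Fin d → ℤ) x, ρ (x + euclVec d fun i => 2*π*(ν i)) = ρ x)
    (hmean : (∫ x in symCell d, ρ x) = (2*π)^d)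
    (hmax : ∀ x, ρ x ≤ ρ x₀) :
    ENNReal.ofReal (C * (π * Real.sqrt d) ^ (-((d:ℝ) + α)) * (2*π)^d * (ρ x₀ - 1)) ≤
      ENNReal.ofReal C *
        ∫⁻ z in symCell d,
          ENNReal.ofReal ((ρ x₀ - ρ (x₀ + z)) / ‖z‖ ^ ((d:ℝ) + α)) := by
  have h2π : (0:ℝ) < 2*π := by positivity
  have hd0 : (0:ℝ) < Real.sqrt d := Real.sqrt_pos.mpr (by exact_mod_cast hd)
  have hbase : (0:ℝ) < π * Real.sqrt d := mul_pos pi_pos hd0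
  have hppos : (0:ℝ) < (d:ℝ) + α := by positivity
  have hKpos : (0:ℝ) < (π * Real.sqrt d) ^ (-((d:ℝ) + α)) :=
    Real.rpow_pos_of_pos hbase _
  have hvol := volume_symCell d
  have hvolne : volume (symCell d) ≠ ⊤ := by
    rw [hvol]; exact ENNReal.pow_ne_top ENNReal.ofReal_ne_top
  have hvtoReal : (volume (symCell d)).toReal = (2*π)^d := by
    rw [hvol, ENNReal.toReal_pow, ENNReal.toReal_ofReal h2π.le]
  have hmeas : AEStronglyMeasurable (fun z => ρ (x₀ + z)) volume :=
    (hcont.comp (continuous_const.add continuous_id)).aestronglyMeasurable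
  have hbound : ∀ᵐ z ∂(volume.restrict (symCell d)), ‖ρ (x₀ + z)‖ ≤ ρ x₀ :=
    ae_of_all _ fun z => by rw [Real.norm_of_nonneg (hnonneg _)]; exact hmax _
  have hInt : IntegrableOn (fun z => ρ (x₀ + z)) (symCell d) :=
    Measure.integrableOn_of_bounded hvolne hmeas hbound
  have hIntρ : IntegrableOn ρ (symCell d) :=
    Measure.integrableOn_of_bounded hvolne hcont.aestronglyMeasurable
      (ae_of_all _ fun z => by rw [Real.norm_of_nonneg (hnonneg _)]; exact hmax _)
  have hconst : IntegrableOn (fun _ => ρ x₀) (symCell d) :=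
    integrableOn_const hvolne
  have hmeanT : ∫ z in symCell d, ρ (x₀ + z) = (2*π)^d := by
    rw [integral_translate d ρ hper x₀, hmean]
  have hρ1 : 1 ≤ ρ x₀ := by
    have hle : (2*π)^d ≤ ρ x₀ * (2*π)^d := by
      calc (2*π)^d = ∫ z in symCell d, ρ z := hmean.symm
        _ ≤ ∫ _z in symCell d, ρ x₀ := setIntegral_mono hIntρ hconst (fun z => hmax z)
        _ = ρ x₀ * (2*π)^d := by rw [setIntegral_const, smul_eq_mul, measureReal_def, hvtoReal, mul_comm]
    have hpow : (0:ℝ) < (2*π)^d := by positivity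
    nlinarith
  have hIntSub : IntegrableOn (fun z => ρ x₀ - ρ (x₀ + z)) (symCell d) := hconst.sub hInt
  have hIntVal : ∫ z in symCell d, (ρ x₀ - ρ (x₀ + z)) = (2*π)^d * (ρ x₀ - 1) := by
    rw [integral_sub hconst hInt, hmeanT, setIntegral_const, smul_eq_mul, measureReal_def, hvtoReal]
    ring
  have step1 : ∫⁻ z in symCell d,
      ENNReal.ofReal ((π * Real.sqrt d) ^ (-((d:ℝ) + α)) * (ρ x₀ - ρ (x₀ + z))) ≤
      ∫⁻ z in symCell d, ENNReal.ofReal ((ρ x₀ - ρ (x₀ + z)) / ‖z‖ ^ ((d:ℝ) + α)) := by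
    apply setLIntegral_mono' (measurable_symCell d)
    intro z hz
    apply ENNReal.ofReal_le_ofReal
    have ha : 0 ≤ ρ x₀ - ρ (x₀ + z) := sub_nonneg.mpr (hmax _)
    rcases eq_or_ne z 0 with rfl | hz0
    · have h0 : ρ (x₀ + 0) = ρ x₀ := by rw [add_zero]
      rw [h0]
      simp
    · have hzpos : (0:ℝ) < ‖z‖ := norm_pos_iff.mpr hz0
      have hzle : ‖z‖ ≤ π * Real.sqrt d := norm_le_of_mem_symCell hz
      have hrle : ‖z‖ ^ ((d:ℝ) + α) ≤ (π * Real.sqrt d) ^ ((d:ℝ) + α) :=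
        Real.rpow_le_rpow hzpos.le hzle hppos.le
      have hzp : (0:ℝ) < ‖z‖ ^ ((d:ℝ) + α) := Real.rpow_pos_of_pos hzpos _
      have h1 : (π * Real.sqrt d) ^ (-((d:ℝ) + α)) * (ρ x₀ - ρ (x₀ + z))
          = (ρ x₀ - ρ (x₀ + z)) / (π * Real.sqrt d) ^ ((d:ℝ) + α) := by
        rw [Real.rpow_neg hbase.le]; ring
      rw [h1]
      gcongr
  have step2 : ENNReal.ofReal ((π * Real.sqrt d) ^ (-((d:ℝ) + α)) * ((2*π)^d * (ρ x₀ - 1)))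
      = ∫⁻ z in symCell d,
        ENNReal.ofReal ((π * Real.sqrt d) ^ (-((d:ℝ) + α)) * (ρ x₀ - ρ (x₀ + z))) := by
    have hmul : ∀ z : EuclideanSpace ℝ (Fin d),
        ENNReal.ofReal ((π * Real.sqrt d) ^ (-((d:ℝ) + α)) * (ρ x₀ - ρ (x₀ + z)))
        = ENNReal.ofReal ((π * Real.sqrt d) ^ (-((d:ℝ) + α)))
          * ENNReal.ofReal (ρ x₀ - ρ (x₀ + z)) := fun z => ENNReal.ofReal_mul hKpos.le
    simp_rw [hmul]
    rw [lintegral_const_mul' _ _ ENNReal.ofReal_ne_top,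
      ← ofReal_integral_eq_lintegral_ofReal hIntSub
        (ae_of_all _ fun z => sub_nonneg.mpr (hmax _)),
      hIntVal, ← ENNReal.ofReal_mul hKpos.le]
  calc ENNReal.ofReal (C * (π * Real.sqrt d) ^ (-((d:ℝ) + α)) * (2*π)^d * (ρ x₀ - 1))
      = ENNReal.ofReal (C * ((π * Real.sqrt d) ^ (-((d:ℝ) + α)) * ((2*π)^d * (ρ x₀ - 1)))) := by
        ring_nf
    _ = ENNReal.ofReal C
        * ENNReal.ofReal ((π * Real.sqrt d) ^ (-((d:ℝ) + α)) * ((2*π)^d * (ρ x₀ - 1))) :=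
        ENNReal.ofReal_mul hC.le
    _ ≤ ENNReal.ofReal C *
        ∫⁻ z in symCell d, ENNReal.ofReal ((ρ x₀ - ρ (x₀ + z)) / ‖z‖ ^ ((d:ℝ) + α)) := by
        apply mul_le_mul_right
        rw [step2]
        exact step1
end
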